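/- Let λ₁λ₂ > 0, Q(u) = (λ₁u₁² + λ₂u₂²)/2, X(u) = (u₁,u₂,Q(u)), and let C₁ ≥ 1, L ≥ 1. There exist r₁ > 0, ρ₀ ∈ (0,1], and C ≥ 1, depending only on λ₁, λ₂, C₁, L, and ‖χ‖_∞, with the following property. Let U ⊂ ℝ² be open with U ⊆ B(0,r₁), set S_Q = X(U) and μ_Q = χ·H²⌊S_Q with χ : ℝ³ → [0,∞) bounded and supported in S_Q. For 0 < ρ ≤ ρ₀ define E^ext_{e₁} := {X(u) : u ∈ U, |n_Q(u)·e₁| ≤ ρ^{1/2}}, with e₁ = (1,0,0). Then for every tube T of direction e₁, radius C₁ρ, and length parameter L, one has μ_Q(S_Q ∩ T ∩ E^ext_{e₁}) ≤ C ρ^{3/2}. -/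

import Mathlib

noncomputable section
open MeasureTheory Metric Set Function
open scoped ENNReal RealInnerProductSpace

abbrev E3 : Type := EuclideanSpace ℝ (Fin 3)
abbrev E2 : Type := EuclideanSpace ℝ (Fin 2)

def mk3 (a b c : ℝ) : E3 := (WithLp.equiv 2 (Fin 3 → ℝ)).symm ![a, b, c]

/-- Quadratic graph parametrization `X(u) = (u₁, u₂, (l₁u₁² + l₂u₂²)/2)`. -/
def Xf (l₁ l₂ : ℝ) (u : E2) : E3 := mk3 (u 0) (u 1) ((l₁ * (u 0) ^ 2 + l₂ * (u 1) ^ 2) / 2)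

/-- Unit normal of the quadratic graph at `X(u)`. -/
def nQ (l₁ l₂ : ℝ) (u : E2) : E3 :=
  (Real.sqrt (1 + l₁ ^ 2 * (u 0) ^ 2 + l₂ ^ 2 * (u 1) ^ 2))⁻¹ •
    mk3 (-(l₁ * u 0)) (-(l₂ * u 1)) 1

/-- The tube `T(v, y₀, s₀, r, L)`. -/
def tube (v y₀ : E3) (s₀ r L : ℝ) : Set E3 :=
  {x | ‖x - ⟪x, v⟫ • v - y₀‖ ≤ r ∧ |⟪x, v⟫ - s₀| ≤ L}

/-- The surface measure `μ_Q = χ·H²⌊S_Q` of the quadratic patch `S_Q = X(U)`. -/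
def muQ (l₁ l₂ : ℝ) (U : Set E2) (χ : E3 → ℝ) : Measure E3 :=
  ((μH[2] : Measure E3).restrict (Xf l₁ l₂ '' U)).withDensity fun x => ENNReal.ofReal (χ x)

def e1 : E3 := mk3 1 0 0

open scoped NNReal

lemma coord_le_norm {n : ℕ} (x : EuclideanSpace ℝ (Fin n)) (i : Fin n) : |x i| ≤ ‖x‖ := by
  rw [EuclideanSpace.norm_eq]
  refine le_trans ?_ (Real.sqrt_le_sqrt (Finset.single_le_sum (f := fun j => ‖x j‖^2)
    (fun j _ => sq_nonneg _) (Finset.mem_univ i)))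
  rw [Real.sqrt_sq_eq_abs]; simp

lemma inner_e1 (x : E3) : ⟪x, e1⟫ = x 0 := by
  simp [e1, mk3, PiLp.inner_apply, Fin.sum_univ_three, RCLike.inner_apply]

lemma inner_nQ_e1 (l₁ l₂ : ℝ) (u : E2) :
    ⟪nQ l₁ l₂ u, e1⟫ =
      (Real.sqrt (1 + l₁ ^ 2 * (u 0) ^ 2 + l₂ ^ 2 * (u 1) ^ 2))⁻¹ * (-(l₁ * u 0)) := by
  rw [inner_e1]; simp [nQ, mk3]

lemma Xf_apply0 (l₁ l₂ : ℝ) (u : E2) : Xf l₁ l₂ u 0 = u 0 := rfl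
lemma Xf_apply1 (l₁ l₂ : ℝ) (u : E2) : Xf l₁ l₂ u 1 = u 1 := rfl
lemma e1_apply1 : e1 1 = 0 := rfl

lemma Xf_lip (l₁ l₂ r₁ : ℝ) (hr : 0 ≤ r₁) (h12 : (|l₁| + |l₂|) * r₁ ≤ 1) :
    LipschitzOnWith 2 (Xf l₁ l₂) (Metric.ball (0 : E2) r₁) := by
  apply LipschitzOnWith.of_dist_le_mul
  intro u hu v hv
  rw [mem_ball_zero_iff] at hu hv
  set d := dist u v with hdd
  have hd0 : 0 ≤ d := dist_nonneg
  have hc0 : |u 0 - v 0| ≤ d := by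
    have := coord_le_norm (u - v) 0
    simpa [hdd, dist_eq_norm] using this
  have hc1 : |u 1 - v 1| ≤ d := by
    have := coord_le_norm (u - v) 1
    simpa [hdd, dist_eq_norm] using this
  have hu0 : |u 0| ≤ r₁ := le_trans (coord_le_norm u 0) hu.le
  have hu1 : |u 1| ≤ r₁ := le_trans (coord_le_norm u 1) hu.le
  have hv0 : |v 0| ≤ r₁ := le_trans (coord_le_norm v 0) hv.le
  have hv1 : |v 1| ≤ r₁ := le_trans (coord_le_norm v 1) hv.le
  have key : |(l₁ * (u 0) ^ 2 + l₂ * (u 1) ^ 2) / 2 - (l₁ * (v 0) ^ 2 + l₂ * (v 1) ^ 2) / 2| ≤ d := by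
    have e : (l₁ * (u 0) ^ 2 + l₂ * (u 1) ^ 2) / 2 - (l₁ * (v 0) ^ 2 + l₂ * (v 1) ^ 2) / 2
        = (l₁ * (u 0 + v 0) * (u 0 - v 0) + l₂ * (u 1 + v 1) * (u 1 - v 1)) / 2 := by ring
    rw [e]
    have b1 : |l₁ * (u 0 + v 0) * (u 0 - v 0)| ≤ |l₁| * (2 * r₁) * d := by
      rw [abs_mul, abs_mul]
      have hs : |u 0 + v 0| ≤ 2 * r₁ := by
        calc |u 0 + v 0| ≤ |u 0| + |v 0| := abs_add_le _ _
          _ ≤ 2 * r₁ := by linarith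
      exact mul_le_mul (mul_le_mul le_rfl hs (abs_nonneg _) (abs_nonneg _)) hc0 (abs_nonneg _)
        (by positivity)
    have b2 : |l₂ * (u 1 + v 1) * (u 1 - v 1)| ≤ |l₂| * (2 * r₁) * d := by
      rw [abs_mul, abs_mul]
      have hs : |u 1 + v 1| ≤ 2 * r₁ := by
        calc |u 1 + v 1| ≤ |u 1| + |v 1| := abs_add_le _ _
          _ ≤ 2 * r₁ := by linarith
      exact mul_le_mul (mul_le_mul le_rfl hs (abs_nonneg _) (abs_nonneg _)) hc1 (abs_nonneg _)
        (by positivity)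
    have habs : |(l₁ * (u 0 + v 0) * (u 0 - v 0) + l₂ * (u 1 + v 1) * (u 1 - v 1)) / 2|
        ≤ (|l₁ * (u 0 + v 0) * (u 0 - v 0)| + |l₂ * (u 1 + v 1) * (u 1 - v 1)|) / 2 := by
      rw [abs_div]
      simp only [abs_two]
      linarith [abs_add_le (l₁ * (u 0 + v 0) * (u 0 - v 0)) (l₂ * (u 1 + v 1) * (u 1 - v 1))]
    have hfin : (|l₁| + |l₂|) * r₁ * d ≤ d := by
      nlinarith [mul_le_mul_of_nonneg_right h12 hd0]
    calc |(l₁ * (u 0 + v 0) * (u 0 - v 0) + l₂ * (u 1 + v 1) * (u 1 - v 1)) / 2|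
        ≤ (|l₁| * (2 * r₁) * d + |l₂| * (2 * r₁) * d) / 2 := by
          refine le_trans habs ?_
          linarith
      _ = (|l₁| + |l₂|) * r₁ * d := by ring
      _ ≤ d := hfin
  have hdist2 : (dist (u 0) (v 0)) ^ 2 + (dist (u 1) (v 1)) ^ 2 = d ^ 2 := by
    rw [hdd, EuclideanSpace.dist_eq, Real.sq_sqrt (by positivity)]
    simp [Fin.sum_univ_two]
  have h3 : dist (Xf l₁ l₂ u) (Xf l₁ l₂ v) = Real.sqrt
      ((dist (u 0) (v 0)) ^ 2 + (dist (u 1) (v 1)) ^ 2 +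
        (dist ((l₁ * (u 0) ^ 2 + l₂ * (u 1) ^ 2) / 2) ((l₁ * (v 0) ^ 2 + l₂ * (v 1) ^ 2) / 2)) ^ 2) := by
    rw [EuclideanSpace.dist_eq, Fin.sum_univ_three]
    rfl
  rw [h3]
  have hQ : (dist ((l₁ * (u 0) ^ 2 + l₂ * (u 1) ^ 2) / 2) ((l₁ * (v 0) ^ 2 + l₂ * (v 1) ^ 2) / 2)) ^ 2
      ≤ d ^ 2 := by
    rw [Real.dist_eq]
    have := abs_nonneg ((l₁ * (u 0) ^ 2 + l₂ * (u 1) ^ 2) / 2 - (l₁ * (v 0) ^ 2 + l₂ * (v 1) ^ 2) / 2)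
    nlinarith
  calc Real.sqrt _ ≤ Real.sqrt ((2 * d) ^ 2) := by
        apply Real.sqrt_le_sqrt
        nlinarith
    _ = 2 * d := Real.sqrt_sq (by positivity)
    _ = (2:ℝ≥0) * d := by norm_num

set_option maxHeartbeats 1000000 in
/-- upper bound `ρ^{3/2}` for the extreme mass in a tangent tube. -/
theorem extreme_strip_mass_upper (l₁ l₂ C₁ L Mχ : ℝ) (hl : 0 < l₁ * l₂)
    (hC₁ : 1 ≤ C₁) (hL : 1 ≤ L) (hMχ : 0 ≤ Mχ) :
    ∃ r₁ : ℝ, 0 < r₁ ∧ ∃ ρ₀ ∈ Set.Ioc (0 : ℝ) 1, ∃ C : ℝ, 1 ≤ C ∧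
      ∀ U : Set E2, IsOpen U → U ⊆ Metric.ball (0 : E2) r₁ →
      ∀ χ : E3 → ℝ, (∀ x, 0 ≤ χ x) → (∀ x, χ x ≤ Mχ) →
        Function.support χ ⊆ Xf l₁ l₂ '' U →
        ∀ ρ : ℝ, 0 < ρ → ρ ≤ ρ₀ →
        ∀ y₀ : E3, ⟪y₀, e1⟫ = 0 → ∀ s₀ : ℝ,
          muQ l₁ l₂ U χ
              (Xf l₁ l₂ '' U ∩ tube e1 y₀ s₀ (C₁ * ρ) L ∩
                Xf l₁ l₂ '' {u : E2 | u ∈ U ∧ |⟪nQ l₁ l₂ u, e1⟫| ≤ Real.sqrt ρ}) ≤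
            ENNReal.ofReal (C * ρ ^ ((3 : ℝ) / 2)) := by
  have hl₁ : l₁ ≠ 0 := by rintro rfl; simp at hl
  have al₁ : (0:ℝ) < |l₁| := abs_pos.2 hl₁
  have hden : (0:ℝ) < 1 + |l₁| + |l₂| := by positivity
  refine ⟨(1 + |l₁| + |l₂|)⁻¹, inv_pos.2 hden, 1, ⟨one_pos, le_rfl⟩,
    1 + 128 * Mχ * C₁ / |l₁|, le_add_of_nonneg_right (by positivity), ?_⟩
  set r₁ : ℝ := (1 + |l₁| + |l₂|)⁻¹ with hr₁def
  set C : ℝ := 1 + 128 * Mχ * C₁ / |l₁| with hCdef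
  have hr₁pos : 0 < r₁ := inv_pos.2 hden
  have h1 : |l₁| * r₁ ≤ 1 := by
    rw [hr₁def, mul_inv_le_iff₀ hden]
    nlinarith [abs_nonneg l₂]
  have h12 : (|l₁| + |l₂|) * r₁ ≤ 1 := by
    rw [hr₁def, mul_inv_le_iff₀ hden]
    nlinarith
  intro U hUopen hUball χ hχ0 hχM hχsupp ρ hρ hρ1 y₀ hy₀ s₀
  have hsρ : 0 < Real.sqrt ρ := Real.sqrt_pos.2 hρ
  set a : ℝ := 2 * Real.sqrt ρ / |l₁| with hadef
  set b : ℝ := C₁ * ρ with hbdef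
  have ha0 : 0 < a := by positivity
  have hb0 : 0 < b := by positivity
  set A : Set E2 := {u : E2 | |u 0| ≤ a ∧ |u 1 - y₀ 1| ≤ b} ∩ Metric.ball (0 : E2) r₁ with hAdef
  -- Step 1: the target set is contained in Xf '' A
  have hsub : Xf l₁ l₂ '' U ∩ tube e1 y₀ s₀ (C₁ * ρ) L ∩
      Xf l₁ l₂ '' {u : E2 | u ∈ U ∧ |⟪nQ l₁ l₂ u, e1⟫| ≤ Real.sqrt ρ} ⊆ Xf l₁ l₂ '' A := by
    rintro x ⟨⟨-, hxt⟩, u, ⟨huU, hun⟩, rfl⟩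
    have huball : u ∈ Metric.ball (0 : E2) r₁ := hUball huU
    have hu : ‖u‖ < r₁ := mem_ball_zero_iff.1 huball
    refine ⟨u, ⟨⟨?_, ?_⟩, huball⟩, rfl⟩
    · -- |u 0| ≤ a, from normal condition
      set w : ℝ := 1 + l₁ ^ 2 * (u 0) ^ 2 + l₂ ^ 2 * (u 1) ^ 2 with hwdef
      have hu0 : |u 0| ≤ r₁ := le_trans (coord_le_norm u 0) hu.le
      have hu1 : |u 1| ≤ r₁ := le_trans (coord_le_norm u 1) hu.le
      have h2 : |l₂| * r₁ ≤ 1 := by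
        rw [hr₁def, mul_inv_le_iff₀ hden]
        nlinarith [abs_nonneg l₁]
      have t1 : |l₁| * |u 0| ≤ 1 :=
        le_trans (mul_le_mul_of_nonneg_left hu0 (abs_nonneg _)) h1
      have t2 : |l₂| * |u 1| ≤ 1 :=
        le_trans (mul_le_mul_of_nonneg_left hu1 (abs_nonneg _)) h2
      have e1' : l₁ ^ 2 * (u 0) ^ 2 ≤ 1 := by
        have h' : (|l₁| * |u 0|) * (|l₁| * |u 0|) ≤ 1 * 1 :=
          mul_le_mul t1 t1 (mul_nonneg (abs_nonneg _) (abs_nonneg _)) zero_le_one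
        calc l₁ ^ 2 * (u 0) ^ 2 = (|l₁| * |u 0|) * (|l₁| * |u 0|) := by
              rw [← sq_abs l₁, ← sq_abs (u 0)]; ring
          _ ≤ 1 := by linarith
      have e2' : l₂ ^ 2 * (u 1) ^ 2 ≤ 1 := by
        have h' : (|l₂| * |u 1|) * (|l₂| * |u 1|) ≤ 1 * 1 :=
          mul_le_mul t2 t2 (mul_nonneg (abs_nonneg _) (abs_nonneg _)) zero_le_one
        calc l₂ ^ 2 * (u 1) ^ 2 = (|l₂| * |u 1|) * (|l₂| * |u 1|) := by
              rw [← sq_abs l₂, ← sq_abs (u 1)]; ring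
          _ ≤ 1 := by linarith
      have hx1 : 0 ≤ l₁ ^ 2 * (u 0) ^ 2 := by positivity
      have hx2 : 0 ≤ l₂ ^ 2 * (u 1) ^ 2 := by positivity
      have hw1 : (1:ℝ) ≤ w := by rw [hwdef]; linarith
      have hw3 : w ≤ 3 := by rw [hwdef]; linarith
      have hswpos : 0 < Real.sqrt w := Real.sqrt_pos.2 (by linarith)
      have hsw : Real.sqrt w ≤ 2 := by
        calc Real.sqrt w ≤ Real.sqrt 4 := Real.sqrt_le_sqrt (by linarith)
          _ = 2 := by rw [show (4:ℝ) = 2 ^ 2 by norm_num, Real.sqrt_sq (by norm_num)]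
      have hval : |⟪nQ l₁ l₂ u, e1⟫| = (Real.sqrt w)⁻¹ * (|l₁| * |u 0|) := by
        rw [inner_nQ_e1, ← hwdef, abs_mul, abs_inv, abs_neg, abs_mul,
          abs_of_nonneg (Real.sqrt_nonneg w)]
      rw [hval] at hun
      have hkey : |l₁| * |u 0| ≤ Real.sqrt ρ * Real.sqrt w := by
        rw [inv_mul_le_iff₀ hswpos] at hun
        linarith [hun]
      have : |l₁| * |u 0| ≤ 2 * Real.sqrt ρ := by
        calc |l₁| * |u 0| ≤ Real.sqrt ρ * Real.sqrt w := hkey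
          _ ≤ Real.sqrt ρ * 2 := by nlinarith
          _ = 2 * Real.sqrt ρ := by ring
      rw [hadef, le_div_iff₀ al₁]
      linarith [this]
    · -- |u 1 - y₀ 1| ≤ b, from tube condition
      have hz : (Xf l₁ l₂ u - ⟪Xf l₁ l₂ u, e1⟫ • e1 - y₀) 1 = u 1 - y₀ 1 := by
        simp [Xf, mk3, e1, PiLp.sub_apply, PiLp.smul_apply]
      have h1' := hxt.1
      calc |u 1 - y₀ 1| = |(Xf l₁ l₂ u - ⟪Xf l₁ l₂ u, e1⟫ • e1 - y₀) 1| := by rw [hz]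
        _ ≤ ‖Xf l₁ l₂ u - ⟪Xf l₁ l₂ u, e1⟫ • e1 - y₀‖ := coord_le_norm _ 1
        _ ≤ C₁ * ρ := h1'
  -- Step 2: the rectangle bound
  set R : Set (Fin 2 → ℝ) := Set.pi univ ![Icc (-a) a, Icc (y₀ 1 - b) (y₀ 1 + b)] with hRdef
  have hAR : A ⊆ (WithLp.equiv 2 (Fin 2 → ℝ)).symm '' R := by
    rintro u ⟨⟨h0, h1u⟩, -⟩
    refine ⟨WithLp.equiv 2 (Fin 2 → ℝ) u, ?_, Equiv.symm_apply_apply _ _⟩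
    intro i _
    fin_cases i
    · have := abs_le.1 h0
      simp only [WithLp.equiv_apply, Fin.mk_zero, Fin.isValue, Matrix.cons_val_zero, mem_Icc]
      exact ⟨this.1, this.2⟩
    · have := abs_le.1 h1u
      simp only [WithLp.equiv_apply, Fin.mk_one, Fin.isValue, Matrix.cons_val_one,
        Matrix.head_cons, mem_Icc]
      constructor <;> linarith [this.1, this.2]
  -- Hausdorff measure bounds
  have hμH2 : (μH[(2:ℝ)] : Measure (Fin 2 → ℝ)) = volume := by
    simpa using MeasureTheory.hausdorffMeasure_pi_real (ι := Fin 2)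
  have hvol : (volume : Measure (Fin 2 → ℝ)) R =
      ENNReal.ofReal (2 * a) * ENNReal.ofReal (2 * b) := by
    rw [hRdef, volume_pi_pi, Fin.prod_univ_two]
    simp only [Matrix.cons_val_zero, Matrix.cons_val_one, Matrix.head_cons, Real.volume_Icc]
    congr 1 <;> ring_nf
  set K' : ℝ≥0 := (Fintype.card (Fin 2) : ℝ≥0) ^ ((1 / (2:ℝ≥0∞))).toReal with hK'def
  have hK'lip : LipschitzWith K' ((WithLp.equiv 2 (Fin 2 → ℝ)).symm) :=
    PiLp.lipschitzWith_toLp 2 (fun _ : Fin 2 => ℝ)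
  have hK'2 : K' ≤ 2 := by
    rw [hK'def]
    simp only [Fintype.card_fin]
    calc ((2:ℝ≥0) ^ ((1 / (2:ℝ≥0∞))).toReal) ≤ (2:ℝ≥0) ^ (1:ℝ) := by
          apply NNReal.rpow_le_rpow_of_exponent_le one_le_two
          simp [ENNReal.toReal_inv]
          norm_num
      _ = 2 := NNReal.rpow_one 2
  have hrpow4 : ((2:ℝ≥0∞)) ^ (2:ℝ) = 4 := by
    rw [show (2:ℝ) = ((2:ℕ):ℝ) by norm_num, ENNReal.rpow_natCast]
    norm_num
  have hHA : (μH[2] : Measure E2) A ≤ 4 * (ENNReal.ofReal (2 * a) * ENNReal.ofReal (2 * b)) := by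
    calc (μH[2] : Measure E2) A ≤ μH[2] ((WithLp.equiv 2 (Fin 2 → ℝ)).symm '' R) :=
          measure_mono hAR
      _ ≤ (K' : ℝ≥0∞) ^ (2:ℝ) * μH[2] R :=
          (hK'lip.lipschitzOnWith (s := R)).hausdorffMeasure_image_le (by norm_num)
      _ ≤ (2:ℝ≥0∞) ^ (2:ℝ) * μH[2] R := by
          gcongr
          exact_mod_cast ENNReal.coe_le_coe.2 hK'2
      _ = 4 * ((volume : Measure (Fin 2 → ℝ)) R) := by rw [hrpow4, hμH2]
      _ = 4 * (ENNReal.ofReal (2 * a) * ENNReal.ofReal (2 * b)) := by rw [hvol]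
  have hlip : LipschitzOnWith 2 (Xf l₁ l₂) A :=
    (Xf_lip l₁ l₂ r₁ hr₁pos.le h12).mono (inter_subset_right)
  have hHXA : (μH[2] : Measure E3) (Xf l₁ l₂ '' A) ≤ 4 * (μH[2] : Measure E2) A := by
    calc (μH[2] : Measure E3) (Xf l₁ l₂ '' A) ≤ ((2:ℝ≥0) : ℝ≥0∞) ^ (2:ℝ) * (μH[2] : Measure E2) A :=
          hlip.hausdorffMeasure_image_le (by norm_num)
      _ = 4 * (μH[2] : Measure E2) A := by norm_num [hrpow4]
  -- Step 3: measure chain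
  have hμle : muQ l₁ l₂ U χ ≤ ENNReal.ofReal Mχ • ((μH[2] : Measure E3).restrict (Xf l₁ l₂ '' U)) := by
    unfold muQ
    refine le_trans (withDensity_mono (Filter.Eventually.of_forall fun x =>
      ENNReal.ofReal_le_ofReal (hχM x))) ?_
    rw [withDensity_const]
  set S := Xf l₁ l₂ '' U ∩ tube e1 y₀ s₀ (C₁ * ρ) L ∩
      Xf l₁ l₂ '' {u : E2 | u ∈ U ∧ |⟪nQ l₁ l₂ u, e1⟫| ≤ Real.sqrt ρ} with hSdef
  have chain : muQ l₁ l₂ U χ S ≤ ENNReal.ofReal Mχ *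
      (4 * (4 * (ENNReal.ofReal (2 * a) * ENNReal.ofReal (2 * b)))) := by
    calc muQ l₁ l₂ U χ S
        ≤ (ENNReal.ofReal Mχ • ((μH[2] : Measure E3).restrict (Xf l₁ l₂ '' U))) S :=
          Measure.le_iff'.1 hμle S
      _ = ENNReal.ofReal Mχ * ((μH[2] : Measure E3).restrict (Xf l₁ l₂ '' U)) S := by
          simp [Measure.smul_apply]
      _ ≤ ENNReal.ofReal Mχ * (μH[2] : Measure E3) S := by
          gcongr
          exact Measure.restrict_le_self
      _ ≤ ENNReal.ofReal Mχ * (μH[2] : Measure E3) (Xf l₁ l₂ '' A) := by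
          gcongr
      _ ≤ ENNReal.ofReal Mχ * (4 * (μH[2] : Measure E2) A) := by gcongr
      _ ≤ ENNReal.ofReal Mχ * (4 * (4 * (ENNReal.ofReal (2 * a) * ENNReal.ofReal (2 * b)))) := by
          gcongr
  refine le_trans chain ?_
  have h4 : (4:ℝ≥0∞) = ENNReal.ofReal 4 := by norm_num
  rw [h4, ← ENNReal.ofReal_mul (by positivity), ← ENNReal.ofReal_mul (by norm_num),
    ← ENNReal.ofReal_mul (by norm_num), ← ENNReal.ofReal_mul hMχ]
  apply ENNReal.ofReal_le_ofReal
  have hrw : ρ ^ ((3:ℝ)/2) = ρ * Real.sqrt ρ := by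
    rw [show (3:ℝ)/2 = 1 + 1/2 by norm_num, Real.rpow_add hρ, Real.rpow_one,
      ← Real.sqrt_eq_rpow]
  rw [hrw]
  have heq : Mχ * (4 * (4 * (2 * a * (2 * b)))) = 128 * Mχ * C₁ / |l₁| * (ρ * Real.sqrt ρ) := by
    rw [hadef, hbdef]; ring
  rw [heq, hCdef]
  have hfac : (0:ℝ) ≤ ρ * Real.sqrt ρ := by positivity
  nlinarith [hfac]
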